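/- Let u, v ∈ Z^{d+1}, 1 ≤ j_1, j_2 ≤ d, with (u + Δ_{d,j_1}) ∩ (v + Δ_{d,j_2}) nonempty. Set X_u = {t : v_t = u_t + 1} and X_v = {t : u_t = v_t + 1}. Then (u + Δ_{d,j_1}) ∩ (v + Δ_{d,j_2}) = u + e_{X_u} + conv{e_T : T ⊆ [d+1] \ (X_u ∪ X_v), |T| = j_1 - |X_u|}. -/

import Mathlib

open scoped Classical BigOperators

noncomputable section

/-- Descent set of a permutation of `Fin d`. -/
def descents (d : ℕ) (π : Equiv.Perm (Fin d)) : Finset (Fin d) :=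
  Finset.univ.filter (fun t => ∃ h : (t : ℕ) + 1 < d, π ⟨(t : ℕ) + 1, h⟩ < π t)

/-- Eulerian number `A(d,j)`: permutations of `{1,…,d}` with `j-1` descents. -/
def A (d j : ℕ) : ℕ :=
  (Finset.univ.filter (fun π : Equiv.Perm (Fin d) => (descents d π).card = j - 1)).card

/-- `C s n m`: number of weak compositions of `m` into `n` parts, each part at most `s`. -/
def C (s n : ℕ) (m : ℤ) : ℕ :=
  Fintype.card {v : Fin n → Fin (s + 1) // ∑ t, ((v t : ℕ) : ℤ) = m}

/-- The hypersimplex `Δ_{d,j} ⊆ ℝ^{d+1}`. -/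
def Δ (d j : ℕ) : Set (Fin (d + 1) → ℝ) :=
  {x | ∑ t, x t = j ∧ ∀ t, 0 ≤ x t ∧ x t ≤ 1}

/-- The lattice translate `v + Δ_{d,j}`. -/
def latTranslate (d : ℕ) (v : Fin (d + 1) → ℤ) (j : ℕ) : Set (Fin (d + 1) → ℝ) :=
  {x | (fun t => x t - (v t : ℝ)) ∈ Δ d j}

/-- The 0/1 indicator vector of a subset `T ⊆ [d+1]`. -/
def ind (d : ℕ) (T : Finset (Fin (d + 1))) : Fin (d + 1) → ℝ :=
  fun t => if t ∈ T then 1 else 0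

/-- `F` is a face of `P`: empty, or the set of maximizers of a linear functional over `P`. -/
def IsFace {n : ℕ} (P F : Set (Fin n → ℝ)) : Prop :=
  F = ∅ ∨ ∃ f : (Fin n → ℝ) →ₗ[ℝ] ℝ, F = {x | x ∈ P ∧ ∀ y ∈ P, f y ≤ f x}

/-- The `r`-dilate `rΔ_{d,i}`. -/
def rdil (d r i : ℕ) : Set (Fin (d + 1) → ℝ) :=
  {x | ∑ t, x t = (i : ℝ) * r ∧ ∀ t, 0 ≤ x t ∧ x t ≤ r}

/-- The set `𝒞(s, n, m)` of lattice weak compositions of `m` into `n` parts each `≤ s`. -/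
def Comp (s n : ℕ) (m : ℤ) : Set (Fin n → ℤ) :=
  {v | (∀ t, 0 ≤ v t ∧ v t ≤ s) ∧ ∑ t, v t = m}
lemma hull_lemma (d k : ℕ) (S : Finset (Fin (d+1))) :
    convexHull ℝ {y : Fin (d+1) → ℝ | ∃ T : Finset (Fin (d+1)),
        (∀ t ∈ T, t ∈ S) ∧ T.card = k ∧ y = ind d T} =
      {y | (∀ t, 0 ≤ y t ∧ y t ≤ 1) ∧ (∀ t, t ∉ S → y t = 0) ∧ ∑ t, y t = (k:ℝ)} := by
  set V : Set (Fin (d+1) → ℝ) :=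
    {y | ∃ T : Finset (Fin (d+1)), (∀ t ∈ T, t ∈ S) ∧ T.card = k ∧ y = ind d T} with hVdef
  set P : Set (Fin (d+1) → ℝ) :=
    {y | (∀ t, 0 ≤ y t ∧ y t ≤ 1) ∧ (∀ t, t ∉ S → y t = 0) ∧ ∑ t, y t = (k:ℝ)} with hPdef
  have hVP : V ⊆ P := by
    rintro y ⟨T, hTS, hTcard, rfl⟩
    refine ⟨fun t => ?_, fun t ht => ?_, ?_⟩
    · unfold ind; split <;> norm_num
    · unfold ind; rw [if_neg]; exact fun h => ht (hTS t h)
    · simp [ind, hTcard]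
  have hPconv : Convex ℝ P := by
    rintro y1 ⟨hb1, hz1, hs1⟩ y2 ⟨hb2, hz2, hs2⟩ a b ha hb hab
    refine ⟨fun t => ?_, fun t ht => ?_, ?_⟩
    · simp only [Pi.add_apply, Pi.smul_apply, smul_eq_mul]
      constructor
      · have := (hb1 t).1; have := (hb2 t).1; positivity
      · nlinarith [(hb1 t).2, (hb2 t).2, (hb1 t).1, (hb2 t).1]
    · simp [Pi.add_apply, Pi.smul_apply, hz1 t ht, hz2 t ht]
    · simp only [Pi.add_apply, Pi.smul_apply, smul_eq_mul]
      rw [Finset.sum_add_distrib, ← Finset.mul_sum, ← Finset.mul_sum, hs1, hs2]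
      linear_combination (k:ℝ) * hab
  have hPclosed : IsClosed P := by
    have : P = (Set.pi Set.univ fun _ => Set.Icc (0:ℝ) 1) ∩
        ((⋂ t, {y : Fin (d+1) → ℝ | t ∉ S → y t = 0}) ∩
          {y : Fin (d+1) → ℝ | ∑ t, y t = (k:ℝ)}) := by
      ext y
      simp only [hPdef, Set.mem_setOf_eq, Set.mem_inter_iff, Set.mem_pi, Set.mem_univ,
        Set.mem_Icc, true_implies, Set.mem_iInter]
    rw [this]
    refine (isClosed_set_pi fun t _ => isClosed_Icc).inter (IsClosed.inter ?_ ?_)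
    · refine isClosed_iInter fun t => ?_
      by_cases ht : t ∈ S
      · simp [ht]
      · have : {y : Fin (d+1) → ℝ | t ∉ S → y t = 0} = {y | y t = 0} := by
          ext y; simp [ht]
        rw [this]
        exact isClosed_eq (continuous_apply t) continuous_const
    · exact isClosed_eq (continuous_finset_sum _ fun t _ => continuous_apply t) continuous_const
  have hPcomp : IsCompact P := by
    refine (isCompact_univ_pi (fun _ => isCompact_Icc (a := (0:ℝ)) (b := 1))).of_isClosed_subset hPclosed ?_
    intro y hy t _
    exact ⟨(hy.1 t).1, (hy.1 t).2⟩
  have hVfin : V.Finite := by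
    apply (Set.finite_range (ind d)).subset
    rintro y ⟨T, _, _, rfl⟩
    exact ⟨T, rfl⟩
  have hEV : P.extremePoints ℝ ⊆ V := by
    rintro y ⟨hyP, hext⟩
    have h01 : ∀ t, y t = 0 ∨ y t = 1 := by
      by_contra hcon
      push_neg at hcon
      obtain ⟨t1, ht10, ht11⟩ := hcon
      have hfa : 0 < y t1 := ((hyP.1 t1).1).lt_of_ne (Ne.symm ht10)
      have hfb : y t1 < 1 := ((hyP.1 t1).2).lt_of_ne ht11
      have hex2 : ∃ t2, t2 ≠ t1 ∧ y t2 ≠ 0 ∧ y t2 ≠ 1 := by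
        by_contra h2
        push_neg at h2
        set m := (Finset.univ.erase t1).filter (fun t => y t ≠ 0) with hm
        have hsum1 : ∑ t ∈ Finset.univ.erase t1, y t = (m.card : ℝ) := by
          rw [← Finset.sum_filter_ne_zero]
          have : ∀ t ∈ m, y t = 1 := by
            intro t ht
            rw [hm, Finset.mem_filter, Finset.mem_erase] at ht
            exact h2 t ht.1.1 ht.2
          rw [Finset.sum_congr rfl this]
          simp
        have hsum2 : y t1 + ∑ t ∈ Finset.univ.erase t1, y t = (k : ℝ) := by
          rw [Finset.add_sum_erase _ _ (Finset.mem_univ t1)]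
          exact hyP.2.2
        have h1 : (m.card : ℝ) < k := by rw [hsum1] at hsum2; linarith
        have h2' : (k : ℝ) < m.card + 1 := by rw [hsum1] at hsum2; linarith
        have : m.card < k := by exact_mod_cast h1
        have : k < m.card + 1 := by exact_mod_cast h2'
        omega
      obtain ⟨t2, ht2ne, h20, h21⟩ := hex2
      have hga : 0 < y t2 := ((hyP.1 t2).1).lt_of_ne (Ne.symm h20)
      have hgb : y t2 < 1 := ((hyP.1 t2).2).lt_of_ne h21
      set ε : ℝ := min (min (y t1) (1 - y t1)) (min (y t2) (1 - y t2)) with hε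
      have hεpos : 0 < ε := by
        apply lt_min (lt_min hfa (by linarith)) (lt_min hga (by linarith))
      have he1 : ε ≤ y t1 := le_trans (min_le_left _ _) (min_le_left _ _)
      have he2 : ε ≤ 1 - y t1 := le_trans (min_le_left _ _) (min_le_right _ _)
      have he3 : ε ≤ y t2 := le_trans (min_le_right _ _) (min_le_left _ _)
      have he4 : ε ≤ 1 - y t2 := le_trans (min_le_right _ _) (min_le_right _ _)
      set δ : Fin (d+1) → ℝ := fun t => if t = t1 then ε else if t = t2 then -ε else 0 with hδdef
      have hδsum : ∑ t, δ t = 0 := by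
        have hsplit : ∀ t, δ t = (if t = t1 then ε else 0) + (if t = t2 then -ε else 0) := by
          intro t
          by_cases h1 : t = t1
          · subst h1
            simp [hδdef, ht2ne.symm]
          · by_cases h2 : t = t2
            · subst h2
              simp [hδdef, h1]
            · simp [hδdef, h1, h2]
        simp only [hsplit, Finset.sum_add_distrib, Finset.sum_ite_eq' Finset.univ,
          Finset.mem_univ, if_true]
        ring
      have hmem : ∀ (s : ℝ), s = 1 ∨ s = -1 → (y + s • δ) ∈ P := by
        rintro s hs
        refine ⟨fun t => ?_, fun t ht => ?_, ?_⟩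
        · simp only [Pi.add_apply, Pi.smul_apply, smul_eq_mul, hδdef]
          rcases hs with rfl | rfl <;>
          · by_cases h1 : t = t1
            · subst h1; simp; constructor <;> linarith
            · by_cases h2 : t = t2
              · subst h2; simp [h1]; constructor <;> linarith
              · simp [h1, h2]; exact ⟨(hyP.1 t).1, (hyP.1 t).2⟩
        · have hy0 : y t = 0 := hyP.2.1 t ht
          have hne1 : t ≠ t1 := by intro h; rw [h] at hy0; linarith
          have hne2 : t ≠ t2 := by intro h; rw [h] at hy0; linarith
          simp [Pi.add_apply, hδdef, hne1, hne2, hy0]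
        · simp only [Pi.add_apply, Pi.smul_apply, smul_eq_mul]
          rw [Finset.sum_add_distrib, ← Finset.mul_sum, hδsum, hyP.2.2]
          ring
      have hx1 := hmem 1 (Or.inl rfl)
      have hx2 := hmem (-1) (Or.inr rfl)
      have hseg : y ∈ openSegment ℝ (y + (1:ℝ) • δ) (y + (-1:ℝ) • δ) := by
        refine ⟨1/2, 1/2, by norm_num, by norm_num, by norm_num, ?_⟩
        funext t
        simp only [Pi.add_apply, Pi.smul_apply, smul_eq_mul, Pi.smul_apply]
        ring
      have := hext hx1 hx2 hseg
      have hcontra := congrFun this t1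
      simp [hδdef] at hcontra
      linarith
    refine ⟨Finset.univ.filter (fun t => y t = 1), ?_, ?_, ?_⟩
    · intro t ht
      rw [Finset.mem_filter] at ht
      by_contra hts
      have := hyP.2.1 t hts
      rw [ht.2] at this
      linarith
    · have hsum : ∑ t, y t =
          ((Finset.univ.filter (fun t => y t = 1)).card : ℝ) := by
        rw [show ∑ t, y t = ∑ t, (if y t = 1 then (1:ℝ) else 0) by
          refine Finset.sum_congr rfl fun t _ => ?_
          rcases h01 t with h | h <;> simp [h]]
        simp [Finset.sum_ite_eq, Finset.sum_boole]
      rw [hyP.2.2] at hsum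
      exact_mod_cast hsum.symm
    · funext t
      unfold ind
      rcases h01 t with h | h <;> simp [h]
  refine le_antisymm (convexHull_min hVP hPconv) ?_
  have hKM := closure_convexHull_extremePoints hPcomp hPconv
  calc P = closure (convexHull ℝ (P.extremePoints ℝ)) := hKM.symm
    _ ⊆ closure (convexHull ℝ V) := closure_mono (convexHull_mono hEV)
    _ = convexHull ℝ V := ((hVfin.isCompact_convexHull (𝕜 := ℝ)).isClosed).closure_eq

theorem stmt6 (d : ℕ) (u v : Fin (d + 1) → ℤ) (j1 j2 : ℕ)
    (h11 : 1 ≤ j1) (h1d : j1 ≤ d) (h21 : 1 ≤ j2) (h2d : j2 ≤ d)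
    (hne : (latTranslate d u j1 ∩ latTranslate d v j2).Nonempty) :
    latTranslate d u j1 ∩ latTranslate d v j2 =
      (fun y => (fun t => (u t : ℝ)) +
          ind d (Finset.univ.filter (fun t => v t = u t + 1)) + y) ''
        convexHull ℝ {y : Fin (d + 1) → ℝ | ∃ T : Finset (Fin (d + 1)),
          (∀ t ∈ T, ¬(v t = u t + 1) ∧ ¬(u t = v t + 1)) ∧
          T.card = j1 - (Finset.univ.filter (fun t => v t = u t + 1)).card ∧
          y = ind d T} := by
  classical
  set Xu := Finset.univ.filter (fun t => v t = u t + 1) with hXu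
  set Xv := Finset.univ.filter (fun t => u t = v t + 1) with hXv
  set S := Finset.univ.filter (fun t => ¬(v t = u t + 1) ∧ ¬(u t = v t + 1)) with hS
  obtain ⟨x0, hx0u, hx0v⟩ := hne
  simp only [latTranslate, Δ, Set.mem_setOf_eq] at hx0u hx0v
  obtain ⟨hs1, hb1⟩ := hx0u
  obtain ⟨hs2, hb2⟩ := hx0v
  -- trichotomy
  have htri : ∀ t, v t = u t + 1 ∨ u t = v t + 1 ∨ u t = v t := by
    intro t
    have h1 := hb1 t
    have h2 := hb2 t
    have hc1 : ((u t : ℝ) - v t) ≤ 1 := by linarith [h1.2, h2.1]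
    have hc2 : ((v t : ℝ) - u t) ≤ 1 := by linarith [h1.1, h2.2]
    have hc1' : (u t - v t : ℤ) ≤ 1 := by exact_mod_cast hc1
    have hc2' : (v t - u t : ℤ) ≤ 1 := by exact_mod_cast hc2
    omega
  have hindXu : ∀ t, ind d Xu t = if t ∈ Xu then (1:ℝ) else 0 := fun t => rfl
  have hsumXu : ∑ t, ind d Xu t = (Xu.card : ℝ) := by simp [ind]
  have hmemXu : ∀ t, t ∈ Xu ↔ v t = u t + 1 := by
    intro t; rw [hXu, Finset.mem_filter]; simp
  have hmemXv : ∀ t, t ∈ Xv ↔ u t = v t + 1 := by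
    intro t; rw [hXv, Finset.mem_filter]; simp
  have hmemS : ∀ t, t ∈ S ↔ ¬(v t = u t + 1) ∧ ¬(u t = v t + 1) := by
    intro t; rw [hS, Finset.mem_filter]; simp
  -- key pointwise facts for any point x in the intersection
  have key : ∀ x : Fin (d+1) → ℝ,
      (∀ t, 0 ≤ x t - (u t:ℝ) ∧ x t - (u t:ℝ) ≤ 1) →
      (∀ t, 0 ≤ x t - (v t:ℝ) ∧ x t - (v t:ℝ) ≤ 1) →
      (∀ t ∈ Xu, x t - (u t:ℝ) = 1) ∧ (∀ t ∈ Xv, x t - (u t:ℝ) = 0) := by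
    intro x hxb1 hxb2
    constructor
    · intro t ht
      rw [hmemXu] at ht
      have hv : (v t : ℝ) = (u t : ℝ) + 1 := by exact_mod_cast ht
      have := (hxb2 t).1
      rw [hv] at this
      linarith [(hxb1 t).2]
    · intro t ht
      rw [hmemXv] at ht
      have hu : (u t : ℝ) = (v t : ℝ) + 1 := by exact_mod_cast ht
      have := (hxb2 t).2
      linarith [(hxb1 t).1]
  obtain ⟨h0Xu, h0Xv⟩ := key x0 hb1 hb2
  -- |Xu| ≤ j1
  have hle : Xu.card ≤ j1 := by
    have hsum0 : ∑ t, (x0 t - (u t:ℝ) - ind d Xu t) = (j1:ℝ) - Xu.card := by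
      rw [Finset.sum_sub_distrib, hsumXu, hs1]
    have hnn : ∀ t ∈ Finset.univ, (0:ℝ) ≤ x0 t - (u t:ℝ) - ind d Xu t := by
      intro t _
      by_cases ht : t ∈ Xu
      · rw [hindXu, if_pos ht, h0Xu t ht]; norm_num
      · rw [hindXu, if_neg ht]; linarith [(hb1 t).1]
    have := Finset.sum_nonneg hnn
    rw [hsum0] at this
    have : (Xu.card : ℝ) ≤ j1 := by linarith
    exact_mod_cast this
  have hcast : ((j1 - Xu.card : ℕ) : ℝ) = (j1:ℝ) - Xu.card := by
    rw [Nat.cast_sub hle]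
  -- sum of u - v
  have hsum_uv : ∑ t, ((u t:ℝ) - v t) = (j2:ℝ) - j1 := by
    have : ∑ t, ((x0 t - (v t:ℝ)) - (x0 t - (u t:ℝ))) = (j2:ℝ) - j1 := by
      rw [Finset.sum_sub_distrib, hs1, hs2]
    rw [← this]
    exact Finset.sum_congr rfl fun t _ => by ring
  -- rewrite RHS via hull_lemma
  have hVeq : {y : Fin (d + 1) → ℝ | ∃ T : Finset (Fin (d + 1)),
      (∀ t ∈ T, ¬(v t = u t + 1) ∧ ¬(u t = v t + 1)) ∧
      T.card = j1 - Xu.card ∧ y = ind d T} =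
      {y : Fin (d+1) → ℝ | ∃ T : Finset (Fin (d+1)),
        (∀ t ∈ T, t ∈ S) ∧ T.card = j1 - Xu.card ∧ y = ind d T} := by
    ext y
    simp only [Set.mem_setOf_eq]
    constructor
    · rintro ⟨T, hT, hc, rfl⟩
      exact ⟨T, fun t ht => (hmemS t).2 (hT t ht), hc, rfl⟩
    · rintro ⟨T, hT, hc, rfl⟩
      exact ⟨T, fun t ht => (hmemS t).1 (hT t ht), hc, rfl⟩
  rw [hVeq, hull_lemma]
  ext x
  simp only [Set.mem_inter_iff, Set.mem_image, latTranslate, Δ, Set.mem_setOf_eq]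
  constructor
  · rintro ⟨⟨hxs1, hxb1⟩, ⟨hxs2, hxb2⟩⟩
    obtain ⟨hxXu, hxXv⟩ := key x hxb1 hxb2
    refine ⟨fun t => x t - (u t:ℝ) - ind d Xu t, ⟨fun t => ?_, fun t ht => ?_, ?_⟩, ?_⟩
    · show 0 ≤ x t - (u t:ℝ) - ind d Xu t ∧ x t - (u t:ℝ) - ind d Xu t ≤ 1
      by_cases ht : t ∈ Xu
      · rw [hindXu, if_pos ht, hxXu t ht]; norm_num
      · rw [hindXu, if_neg ht, sub_zero]; exact hxb1 t
    · show x t - (u t:ℝ) - ind d Xu t = 0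
      rw [hmemS] at ht
      push_neg at ht
      by_cases htu : v t = u t + 1
      · have htXu : t ∈ Xu := (hmemXu t).2 htu
        rw [hindXu, if_pos htXu, hxXu t htXu]; norm_num
      · have htv : u t = v t + 1 := ht htu
        have htXv : t ∈ Xv := (hmemXv t).2 htv
        have htXu : t ∉ Xu := by
          rw [hmemXu]; omega
        rw [hindXu, if_neg htXu, sub_zero, hxXv t htXv]
    · rw [Finset.sum_sub_distrib, hsumXu, hxs1, hcast]
    · funext t
      simp only [Pi.add_apply]
      ring
  · rintro ⟨y, ⟨hyb, hyz, hys⟩, rfl⟩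
    have hyXu : ∀ t ∈ Xu, y t = 0 := by
      intro t ht
      rw [hmemXu] at ht
      exact hyz t (by rw [hmemS]; push_neg; intro h; exact absurd ht h)
    have hyXv : ∀ t ∈ Xv, y t = 0 := by
      intro t ht
      rw [hmemXv] at ht
      exact hyz t (by rw [hmemS]; push_neg; intro h; omega)
    have hval : ∀ t, ((fun t => (u t:ℝ)) + ind d Xu + y) t = (u t:ℝ) + ind d Xu t + y t :=
      fun t => rfl
    constructor
    · constructor
      · simp only [hval]
        have : ∀ t, (u t:ℝ) + ind d Xu t + y t - (u t:ℝ) = ind d Xu t + y t := fun t => by ring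
        rw [Finset.sum_congr rfl fun t _ => this t, Finset.sum_add_distrib, hsumXu, hys, hcast]
        ring
      · intro t
        simp only [hval]
        by_cases ht : t ∈ Xu
        · rw [hindXu, if_pos ht, hyXu t ht]; norm_num
        · rw [hindXu, if_neg ht]
          constructor
          · linarith [(hyb t).1]
          · linarith [(hyb t).2]
    · constructor
      · simp only [hval]
        have : ∀ t, (u t:ℝ) + ind d Xu t + y t - (v t:ℝ) =
            ((u t:ℝ) - v t) + ind d Xu t + y t := fun t => by ring
        rw [Finset.sum_congr rfl fun t _ => this t]
        rw [Finset.sum_add_distrib, Finset.sum_add_distrib, hsum_uv, hsumXu, hys, hcast]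
        ring
      · intro t
        simp only [hval]
        rcases htri t with htu | htv | hteq
        · have htXu : t ∈ Xu := (hmemXu t).2 htu
          have hv : (v t : ℝ) = (u t : ℝ) + 1 := by exact_mod_cast htu
          rw [hindXu, if_pos htXu, hyXu t htXu, hv]
          norm_num
        · have htXv : t ∈ Xv := (hmemXv t).2 htv
          have htXu : t ∉ Xu := by rw [hmemXu]; omega
          have hu : (u t : ℝ) = (v t : ℝ) + 1 := by exact_mod_cast htv
          rw [hindXu, if_neg htXu, hyXv t htXv, hu]
          norm_num
        · have htXu : t ∉ Xu := by rw [hmemXu]; omega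
          have heq : (u t : ℝ) = (v t : ℝ) := by exact_mod_cast hteq
          rw [hindXu, if_neg htXu, heq]
          constructor
          · linarith [(hyb t).1]
          · linarith [(hyb t).2]
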